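/- Let X be a schematic space with structure functor 𝒪. For all t, x, y ∈ X with t ≤ x and t ≤ y, set S = {z : x ≤ z and y ≤ z}. Then the canonical ring homomorphism 𝒪(x) ⊗_{𝒪(t)} 𝒪(y) → ∏_{z ∈ S} 𝒪(z), a ⊗ b ↦ (r_{x z}(a) · r_{y z}(b))_{z}, is injective and its image is exactly the subring of compatible families {s ∈ ∏_{z ∈ S} 𝒪(z) : r_{z z'}(s_z) = s_{z'} for all z ≤ z' in S}; equivalently, the induced ring homomorphism from 𝒪(x) ⊗_{𝒪(t)} 𝒪(y) onto the limit of 𝒪 restricted to the subposet S = U_x ∩ U_y is bijective. -/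

import Mathlib

/-!
STATEMENT 7: For a schematic space `(X, 𝒪)` and `t ≤ x`, `t ≤ y` in `X`, with
`S = {z : x ≤ z and y ≤ z}`, the canonical ring homomorphism
`𝒪(x) ⊗_{𝒪(t)} 𝒪(y) → ∏_{z ∈ S} 𝒪(z)`, `a ⊗ b ↦ (r_{x z}(a) · r_{y z}(b))_z`, is injective
with image exactly the subring of compatible families, i.e. it is a bijection onto the
limit of `𝒪` restricted to the subposet `S = U_x ∩ U_y`.
-/

open CategoryTheory TensorProduct

universe u

variable {X : Type u} [PartialOrder X] (𝒪 : X ⥤ CommRingCat.{u})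

/-- The subposet `S = U_x ∩ U_y` of common upper bounds of `x` and `y`. -/
def Sxy (x y : X) : Type u := {z : X // x ≤ z ∧ y ≤ z}

/-- The canonical ring homomorphism `𝒪(x) ⊗_{𝒪(t)} 𝒪(y) → ∏_{z ∈ S} 𝒪(z)`,
`a ⊗ b ↦ (r_{x z}(a) · r_{y z}(b))_z`. -/
noncomputable def canMap {t x y : X} (htx : t ≤ x) (hty : t ≤ y) :
    letI : Algebra (𝒪.obj t) (𝒪.obj x) := (𝒪.map (homOfLE htx)).hom.toAlgebra
    letI : Algebra (𝒪.obj t) (𝒪.obj y) := (𝒪.map (homOfLE hty)).hom.toAlgebra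
    TensorProduct (𝒪.obj t) (𝒪.obj x) (𝒪.obj y) →+* ((z : Sxy x y) → 𝒪.obj z.1) := by
  letI : Algebra (𝒪.obj t) (𝒪.obj x) := (𝒪.map (homOfLE htx)).hom.toAlgebra
  letI : Algebra (𝒪.obj t) (𝒪.obj y) := (𝒪.map (homOfLE hty)).hom.toAlgebra
  letI : ∀ z : Sxy x y, Algebra (𝒪.obj t) (𝒪.obj z.1) :=
    fun z => (𝒪.map (homOfLE (htx.trans z.2.1))).hom.toAlgebra
  refine (Algebra.TensorProduct.productMap ?_ ?_).toRingHom
  · exact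
    { toRingHom := Pi.ringHom fun z => (𝒪.map (homOfLE z.2.1)).hom
      commutes' := fun a => by
        funext z
        show (𝒪.map (homOfLE z.2.1)) ((𝒪.map (homOfLE htx)) a) =
          (𝒪.map (homOfLE (htx.trans z.2.1))) a
        rw [← comp_apply, ← 𝒪.map_comp]
        rfl }
  · exact
    { toRingHom := Pi.ringHom fun z => (𝒪.map (homOfLE z.2.2)).hom
      commutes' := fun a => by
        funext z
        show (𝒪.map (homOfLE z.2.2)) ((𝒪.map (homOfLE hty)) a) =
          (𝒪.map (homOfLE (htx.trans z.2.1))) a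
        rw [← comp_apply, ← 𝒪.map_comp]
        rfl }


set_option maxHeartbeats 4000000


open TensorProduct

section Aux

variable {R S : Type*} [CommRing R] [CommRing S] [Algebra R S]

lemma ffInjective [Module.FaithfullyFlat R S] : Function.Injective (algebraMap R S) := by
  rw [injective_iff_map_eq_zero]
  intro r hr
  have h0 : LinearMap.toSpanSingleton R R r = 0 := by
    rw [Module.FaithfullyFlat.zero_iff_lTensor_zero R S]
    apply TensorProduct.ext'
    intro s c
    rw [LinearMap.lTensor_tmul, LinearMap.zero_apply]
    have h1 : (LinearMap.toSpanSingleton R R r) c = (c * r) • (1 : R) := by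
      simp [LinearMap.toSpanSingleton_apply, smul_eq_mul]
    rw [h1, tmul_smul, smul_tmul', Algebra.smul_def, map_mul, hr, mul_zero, zero_mul,
      zero_tmul]
  have := congrArg (fun g => g 1) (congrArg (fun l => l.toFun) h0)
  simpa using this

lemma amitsur [Module.FaithfullyFlat R S] (s : S)
    (h : s ⊗ₜ[R] (1 : S) = (1 : S) ⊗ₜ[R] s) : s ∈ Set.range (algebraMap R S) := by
  let f : R →ₗ[R] S := Algebra.linearMap R S
  let d : S →ₗ[R] S ⊗[R] S := (TensorProduct.mk R S S).flip 1 - TensorProduct.mk R S S 1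
  have hd : ∀ s' : S, d s' = s' ⊗ₜ[R] 1 - 1 ⊗ₜ[R] s' := fun s' => by
    simp [d, LinearMap.sub_apply, TensorProduct.mk_apply]
  -- homotopy
  let σ : S ⊗[R] S →ₗ[R] S ⊗[R] R := ((TensorProduct.mk R S R).flip 1) ∘ₗ LinearMap.mul' R S
  let τ : S ⊗[R] (S ⊗[R] S) →ₗ[R] S ⊗[R] S :=
    (LinearMap.rTensor S (LinearMap.mul' R S)) ∘ₗ (TensorProduct.assoc R S S S).symm.toLinearMap
  have homotopy : ∀ u : S ⊗[R] S,
      (LinearMap.lTensor S f) (σ u) - τ ((LinearMap.lTensor S d) u) = u := by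
    intro u
    induction u using TensorProduct.induction_on with
    | zero => simp
    | tmul a b =>
        have hστ : σ (a ⊗ₜ[R] b) = (a * b) ⊗ₜ[R] (1 : R) := rfl
        have hdl : (LinearMap.lTensor S d) (a ⊗ₜ[R] b)
            = a ⊗ₜ[R] (b ⊗ₜ[R] (1:S)) - a ⊗ₜ[R] ((1:S) ⊗ₜ[R] b) := by
          rw [LinearMap.lTensor_tmul, hd, tmul_sub]
        rw [hστ, hdl, map_sub]
        have h1 : τ (a ⊗ₜ[R] (b ⊗ₜ[R] (1:S))) = (a * b) ⊗ₜ[R] (1:S) := by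
          simp [τ, TensorProduct.assoc_symm_tmul, LinearMap.rTensor_tmul, LinearMap.mul'_apply]
        have h2 : τ (a ⊗ₜ[R] ((1:S) ⊗ₜ[R] b)) = (a * 1) ⊗ₜ[R] b := by
          simp [τ, TensorProduct.assoc_symm_tmul, LinearMap.rTensor_tmul, LinearMap.mul'_apply]
        have h3 : (LinearMap.lTensor S f) ((a * b) ⊗ₜ[R] (1 : R)) = (a * b) ⊗ₜ[R] (1:S) := by
          simp [f, LinearMap.lTensor_tmul]
        rw [h1, h2, h3, mul_one, sub_sub_cancel]
    | add u v hu hv =>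
        rw [map_add σ, map_add (LinearMap.lTensor S f), map_add (LinearMap.lTensor S d), map_add τ, add_sub_add_comm, hu, hv]
  have hex : Function.Exact f d := by
    apply Module.FaithfullyFlat.lTensor_reflects_exact R S
    intro u
    constructor
    · intro hu
      refine ⟨σ u, ?_⟩
      have := homotopy u
      rw [hu, map_zero, sub_zero] at this
      exact this
    · rintro ⟨v, rfl⟩
      rw [← LinearMap.comp_apply, ← LinearMap.lTensor_comp]
      have hdf : d ∘ₗ f = 0 := by
        ext
        show d (algebraMap R S 1) = 0
        rw [hd, Algebra.algebraMap_eq_smul_one, smul_tmul, tmul_smul, sub_self]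
      rw [hdf, LinearMap.lTensor_zero, LinearMap.zero_apply]
  have hds : d s = 0 := by rw [hd, h, sub_self]
  exact (hex s).1 hds

end Aux

lemma sum_single_eq {ι : Type*} [Fintype ι] [DecidableEq ι] {M : ι → Type*}
    [∀ i, AddCommMonoid (M i)] (f : ∀ i, M i) : ∑ i, Pi.single i (f i) = f := by
  funext w
  rw [Finset.sum_apply]
  rw [Finset.sum_eq_single w (fun b _ hb => Pi.single_eq_of_ne (Ne.symm hb) _)
    (fun h => absurd (Finset.mem_univ w) h)]
  exact Pi.single_eq_same w (f w)

/-- For a schematic space, the canonical map `𝒪(x) ⊗_{𝒪(t)} 𝒪(y) → ∏_{z ∈ S} 𝒪(z)` is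
injective, with image exactly the compatible families, i.e. the limit of `𝒪` on
`S = U_x ∩ U_y`. -/
theorem schematic_tensor_eq_sections
    [Finite X]
    -- all stalks are Noetherian
    (noeth : ∀ x : X, IsNoetherianRing (𝒪.obj x))
    -- schematicity (i): all restrictions are flat
    (flat : ∀ {x y : X} (h : x ≤ y), RingHom.Flat ((𝒪.map (homOfLE h)).hom : 𝒪.obj x →+* 𝒪.obj y))
    -- schematicity (ii): the canonical maps to the products are faithfully flat
    (ff : ∀ {t x y : X} (htx : t ≤ x) (hty : t ≤ y),
      letI : Algebra (𝒪.obj t) (𝒪.obj x) := (𝒪.map (homOfLE htx)).hom.toAlgebra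
      letI : Algebra (𝒪.obj t) (𝒪.obj y) := (𝒪.map (homOfLE hty)).hom.toAlgebra
      letI := (canMap 𝒪 htx hty).toAlgebra
      Module.FaithfullyFlat (TensorProduct (𝒪.obj t) (𝒪.obj x) (𝒪.obj y))
        ((z : Sxy x y) → 𝒪.obj z.1))
    {t x y : X} (htx : t ≤ x) (hty : t ≤ y) :
    Function.Injective (canMap 𝒪 htx hty) ∧
      Set.range (canMap 𝒪 htx hty) =
        {s : (z : Sxy x y) → 𝒪.obj z.1 |
          ∀ (z z' : Sxy x y) (hzz' : z.1 ≤ z'.1), (𝒪.map (homOfLE hzz')) (s z) = s z'} := by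
  classical
  letI : Algebra (𝒪.obj t) (𝒪.obj x) := (𝒪.map (homOfLE htx)).hom.toAlgebra
  letI : Algebra (𝒪.obj t) (𝒪.obj y) := (𝒪.map (homOfLE hty)).hom.toAlgebra
  letI := (canMap 𝒪 htx hty).toAlgebra
  haveI := ff htx hty
  have htmul : ∀ (a : 𝒪.obj x) (b : 𝒪.obj y) (z : Sxy x y),
      canMap 𝒪 htx hty (a ⊗ₜ[𝒪.obj t] b) z
        = 𝒪.map (homOfLE z.2.1) a * 𝒪.map (homOfLE z.2.2) b := fun a b z => rfl
  have hinj : Function.Injective (canMap 𝒪 htx hty) := by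
    have h := ffInjective (R := TensorProduct (𝒪.obj t) (𝒪.obj x) (𝒪.obj y))
      (S := (z : Sxy x y) → 𝒪.obj z.1)
    rwa [RingHom.algebraMap_toAlgebra] at h
  refine ⟨hinj, Set.Subset.antisymm ?_ ?_⟩
  · rintro _ ⟨u, rfl⟩
    intro z z' hzz'
    induction u using TensorProduct.induction_on with
    | zero => simp
    | tmul a b =>
        rw [htmul a b z, htmul a b z', map_mul]
        congr 1
        · rw [← comp_apply, ← 𝒪.map_comp]; rfl
        · rw [← comp_apply, ← 𝒪.map_comp]; rfl
    | add u v hu hv =>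
        rw [map_add, Pi.add_apply, Pi.add_apply, map_add, hu, hv]
  · intro s hs
    simp only [Set.mem_setOf_eq] at hs
    letI : Fintype (Sxy x y) :=
      @Fintype.ofFinite _ (inferInstanceAs (Finite {z : X // x ≤ z ∧ y ≤ z}))
    have hsingle : ∀ (c : 𝒪.obj x) (z : Sxy x y) (a : 𝒪.obj z.1),
        canMap 𝒪 htx hty (c ⊗ₜ[𝒪.obj t] (1 : 𝒪.obj y)) * Pi.single z a
          = Pi.single z ((𝒪.map (homOfLE z.2.1)) c * a) := by
      intro c z a
      funext w
      by_cases hw : w = z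
      · subst hw
        rw [Pi.mul_apply, Pi.single_eq_same, Pi.single_eq_same, htmul, map_one, mul_one]
      · rw [Pi.mul_apply, Pi.single_eq_of_ne hw, Pi.single_eq_of_ne hw, mul_zero]
    have key2 : ∀ z z' : Sxy x y,
        (Pi.single z (s z) : (w : Sxy x y) → 𝒪.obj w.1)
            ⊗ₜ[TensorProduct (𝒪.obj t) (𝒪.obj x) (𝒪.obj y)]
          (Pi.single z' (1 : 𝒪.obj z'.1) : (w : Sxy x y) → 𝒪.obj w.1)
        = (Pi.single z (1 : 𝒪.obj z.1) : (w : Sxy x y) → 𝒪.obj w.1)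
            ⊗ₜ[TensorProduct (𝒪.obj t) (𝒪.obj x) (𝒪.obj y)]
          (Pi.single z' (s z') : (w : Sxy x y) → 𝒪.obj w.1) := by
      intro z z'
      letI : Algebra (𝒪.obj x) (𝒪.obj z.1) := (𝒪.map (homOfLE z.2.1)).hom.toAlgebra
      letI : Algebra (𝒪.obj x) (𝒪.obj z'.1) := (𝒪.map (homOfLE z'.2.1)).hom.toAlgebra
      letI := (canMap 𝒪 z.2.1 z'.2.1).toAlgebra
      haveI := ff z.2.1 z'.2.1
      have hinj' : Function.Injective (canMap 𝒪 z.2.1 z'.2.1) := by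
        have h := ffInjective (R := TensorProduct (𝒪.obj x) (𝒪.obj z.1) (𝒪.obj z'.1))
          (S := (w : Sxy z.1 z'.1) → 𝒪.obj w.1)
        rwa [RingHom.algebraMap_toAlgebra] at h
      have key : (s z) ⊗ₜ[𝒪.obj x] (1 : 𝒪.obj z'.1)
          = (1 : 𝒪.obj z.1) ⊗ₜ[𝒪.obj x] (s z') := by
        apply hinj'
        funext w
        have e1 : canMap 𝒪 z.2.1 z'.2.1 ((s z) ⊗ₜ[𝒪.obj x] (1 : 𝒪.obj z'.1)) w
            = 𝒪.map (homOfLE w.2.1) (s z) := by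
          rw [show canMap 𝒪 z.2.1 z'.2.1 ((s z) ⊗ₜ[𝒪.obj x] (1 : 𝒪.obj z'.1)) w
              = 𝒪.map (homOfLE w.2.1) (s z) * 𝒪.map (homOfLE w.2.2) (1 : 𝒪.obj z'.1) from rfl,
            map_one, mul_one]
        have e2 : canMap 𝒪 z.2.1 z'.2.1 ((1 : 𝒪.obj z.1) ⊗ₜ[𝒪.obj x] (s z')) w
            = 𝒪.map (homOfLE w.2.2) (s z') := by
          rw [show canMap 𝒪 z.2.1 z'.2.1 ((1 : 𝒪.obj z.1) ⊗ₜ[𝒪.obj x] (s z')) w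
              = 𝒪.map (homOfLE w.2.1) (1 : 𝒪.obj z.1) * 𝒪.map (homOfLE w.2.2) (s z') from rfl,
            map_one, one_mul]
        rw [e1, e2,
          hs z ⟨w.1, z.2.1.trans w.2.1, z.2.2.trans w.2.1⟩ w.2.1,
          hs z' ⟨w.1, z.2.1.trans w.2.1, z.2.2.trans w.2.1⟩ w.2.2]
      let B : 𝒪.obj z.1 →+ 𝒪.obj z'.1 →+
          (((w : Sxy x y) → 𝒪.obj w.1) ⊗[TensorProduct (𝒪.obj t) (𝒪.obj x) (𝒪.obj y)]
            ((w : Sxy x y) → 𝒪.obj w.1)) :=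
        { toFun := fun a =>
            { toFun := fun b => (Pi.single z a : (w : Sxy x y) → 𝒪.obj w.1)
                ⊗ₜ[TensorProduct (𝒪.obj t) (𝒪.obj x) (𝒪.obj y)]
                (Pi.single z' b : (w : Sxy x y) → 𝒪.obj w.1)
              map_zero' := by
                show (Pi.single z a : (w : Sxy x y) → 𝒪.obj w.1)
                    ⊗ₜ[TensorProduct (𝒪.obj t) (𝒪.obj x) (𝒪.obj y)]
                    (Pi.single z' (0 : 𝒪.obj z'.1) : (w : Sxy x y) → 𝒪.obj w.1) = 0
                rw [Pi.single_zero, tmul_zero]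
              map_add' := fun b₁ b₂ => by
                show (Pi.single z a : (w : Sxy x y) → 𝒪.obj w.1)
                    ⊗ₜ[TensorProduct (𝒪.obj t) (𝒪.obj x) (𝒪.obj y)]
                    (Pi.single z' (b₁ + b₂) : (w : Sxy x y) → 𝒪.obj w.1) = _
                rw [Pi.single_add, tmul_add] }
          map_zero' := by
            apply AddMonoidHom.ext
            intro b
            show (Pi.single z (0 : 𝒪.obj z.1) : (w : Sxy x y) → 𝒪.obj w.1)
                ⊗ₜ[TensorProduct (𝒪.obj t) (𝒪.obj x) (𝒪.obj y)]
                (Pi.single z' b : (w : Sxy x y) → 𝒪.obj w.1) = 0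
            rw [Pi.single_zero, zero_tmul]
          map_add' := fun a₁ a₂ => by
            apply AddMonoidHom.ext
            intro b
            show (Pi.single z (a₁ + a₂) : (w : Sxy x y) → 𝒪.obj w.1)
                ⊗ₜ[TensorProduct (𝒪.obj t) (𝒪.obj x) (𝒪.obj y)]
                (Pi.single z' b : (w : Sxy x y) → 𝒪.obj w.1) = _
            rw [Pi.single_add, add_tmul]
            rfl }
      have hbal : ∀ (c : 𝒪.obj x) (a : 𝒪.obj z.1) (b : 𝒪.obj z'.1),
          B (c • a) b = B a (c • b) := by
        intro c a b
        have ha : c • a = (𝒪.map (homOfLE z.2.1)) c * a := rfl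
        have hb : c • b = (𝒪.map (homOfLE z'.2.1)) c * b := rfl
        show (Pi.single z (c • a) : (w : Sxy x y) → 𝒪.obj w.1)
            ⊗ₜ[TensorProduct (𝒪.obj t) (𝒪.obj x) (𝒪.obj y)]
            (Pi.single z' b : (w : Sxy x y) → 𝒪.obj w.1)
          = (Pi.single z a : (w : Sxy x y) → 𝒪.obj w.1)
            ⊗ₜ[TensorProduct (𝒪.obj t) (𝒪.obj x) (𝒪.obj y)]
            (Pi.single z' (c • b) : (w : Sxy x y) → 𝒪.obj w.1)
        rw [ha, hb, ← hsingle c z a, ← hsingle c z' b]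
        have hτ : ∀ p : (w : Sxy x y) → 𝒪.obj w.1,
            canMap 𝒪 htx hty (c ⊗ₜ[𝒪.obj t] (1 : 𝒪.obj y)) * p
              = (c ⊗ₜ[𝒪.obj t] (1 : 𝒪.obj y)) • p := fun p => rfl
        rw [hτ, hτ, smul_tmul]
      have := congrArg (TensorProduct.liftAddHom B hbal) key
      rwa [TensorProduct.liftAddHom_tmul, TensorProduct.liftAddHom_tmul] at this
    have hsum1 : ∑ w : Sxy x y, Pi.single w (s w) = s := sum_single_eq s
    have hsum2 : (∑ w : Sxy x y, Pi.single w (1 : 𝒪.obj w.1))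
        = (1 : (w : Sxy x y) → 𝒪.obj w.1) := sum_single_eq 1
    have hfinal : s ⊗ₜ[TensorProduct (𝒪.obj t) (𝒪.obj x) (𝒪.obj y)]
          (1 : (w : Sxy x y) → 𝒪.obj w.1)
        = (1 : (w : Sxy x y) → 𝒪.obj w.1)
          ⊗ₜ[TensorProduct (𝒪.obj t) (𝒪.obj x) (𝒪.obj y)] s := by
      rw [← hsum1, ← hsum2, sum_tmul, sum_tmul]
      simp_rw [tmul_sum]
      exact Finset.sum_congr rfl fun z _ => Finset.sum_congr rfl fun z' _ => key2 z z'
    obtain ⟨u, hu⟩ := amitsur (R := TensorProduct (𝒪.obj t) (𝒪.obj x) (𝒪.obj y)) s hfinal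
    exact ⟨u, by rwa [RingHom.algebraMap_toAlgebra] at hu⟩
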